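/- Let Û and U be two n×K real matrices such that U contains exactly K distinct rows, let δ be the minimum Euclidean distance between two distinct rows of U, and let g be the membership vector assigning each row index of U to its row value; assume each of the K row values occurs at least π₀n times for a constant π₀ > 0. Let ĝ be the output of a k-median clustering algorithm applied to the rows of Û whose objective value is within a constant factor of the global optimum. If ‖Û − U‖_{2,1} ≤ c·n·δ for a small enough constant c, then after an appropriate permutation of cluster labels, ĝ agrees with g on all but at most c⁻¹‖Û − U‖_{2,1}·δ⁻¹ row indices, where ‖M‖_{2,1} denotes the sum of the ℓ₂ norms of the rows of M. -/

import Mathlib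

/-!
STATEMENT 12: k-median mis-clustering bound.  If `U` has exactly `K` distinct rows
(centers `μ`, membership `g`), every community has size at least `π₀ n`, `δ` is the
minimum distance between distinct rows of `U`, `‖Û − U‖_{2,1} ≤ c n δ` for a small
enough constant `c`, and `ĝ` is the labelling of an approximate (constant-factor `a`)
k-median solution on the rows of `Û`, then after a label permutation `ĝ` agrees with `g`
on all but at most `c⁻¹ ‖Û − U‖_{2,1} δ⁻¹` row indices.
-/

noncomputable section

/-- Euclidean norm of a finitely indexed real vector. -/
def l2 {ι : Type*} [Fintype ι] (v : ι → ℝ) : ℝ := Real.sqrt (∑ i, v i ^ 2)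

/-- The (2,1)-norm of a matrix: the sum of the Euclidean norms of its rows. -/
def norm21 {m n : Type*} [Fintype m] [Fintype n] (M : Matrix m n ℝ) : ℝ :=
  ∑ i, l2 (M i)

/-- `ghat` is the labelling of a k-median clustering of the rows of `U` whose objective
value is within a factor `a` of the global optimum. -/
def IsApproxKMedian {n' : Type*} [Fintype n'] (Kt : ℕ) (a : ℝ)
    (U : Matrix n' (Fin Kt) ℝ) (ghat : n' → Fin Kt) : Prop :=
  ∃ cen : Fin Kt → Fin Kt → ℝ,
    ∀ (g' : n' → Fin Kt) (cen' : Fin Kt → Fin Kt → ℝ),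
      ∑ i, l2 (U i - cen (ghat i)) ≤ a * ∑ i, l2 (U i - cen' (g' i))

lemma l2_eq_norm {ι : Type*} [Fintype ι] (v : ι → ℝ) :
    l2 v = ‖(WithLp.equiv 2 (ι → ℝ)).symm v‖ := by
  rw [EuclideanSpace.norm_eq]
  simp [l2, Real.norm_eq_abs, sq_abs]

lemma l2_nonneg {ι : Type*} [Fintype ι] (v : ι → ℝ) : 0 ≤ l2 v := by
  rw [l2_eq_norm]; exact norm_nonneg _

lemma l2_neg {ι : Type*} [Fintype ι] (v : ι → ℝ) : l2 (-v) = l2 v := by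
  simp [l2, l2_eq_norm]

lemma l2_add_le {ι : Type*} [Fintype ι] (u v : ι → ℝ) : l2 (u + v) ≤ l2 u + l2 v := by
  simp only [l2_eq_norm, WithLp.equiv_symm_apply, WithLp.toLp_add]
  exact norm_add_le _ _

lemma l2_sub_le {ι : Type*} [Fintype ι] (u v : ι → ℝ) : l2 (u - v) ≤ l2 u + l2 v := by
  rw [sub_eq_add_neg]
  exact le_trans (l2_add_le _ _) (by rw [l2_neg])

lemma l2_pos {ι : Type*} [Fintype ι] {v : ι → ℝ} (hv : v ≠ 0) : 0 < l2 v := by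
  rw [l2_eq_norm, norm_pos_iff]
  simpa using hv

theorem kmedian_misclustering_bound (a : ℝ) (ha : 1 ≤ a) (π₀ : ℝ) (hπ₀ : 0 < π₀) :
    ∃ c₀ : ℝ, 0 < c₀ ∧ ∀ c : ℝ, 0 < c → c ≤ c₀ →
      ∀ (n K : ℕ) (Uhat U : Matrix (Fin n) (Fin K) ℝ)
        (μ : Fin K → Fin K → ℝ) (g : Fin n → Fin K) (δ : ℝ) (ghat : Fin n → Fin K),
        Function.Injective μ → Function.Surjective g →
        (∀ i, U i = μ (g i)) →
        (∀ k : Fin K, π₀ * n ≤ ((Finset.univ.filter fun i : Fin n => g i = k).card : ℝ)) →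
        IsLeast {d : ℝ | ∃ k k', k ≠ k' ∧ d = l2 (μ k - μ k')} δ →
        norm21 (Uhat - U) ≤ c * n * δ →
        IsApproxKMedian K a Uhat ghat →
        ∃ σ : Equiv.Perm (Fin K),
          ((Finset.univ.filter fun i => σ (ghat i) ≠ g i).card : ℝ) ≤
            c⁻¹ * norm21 (Uhat - U) / δ := by
  have ha0 : (0:ℝ) < 1 + a := by linarith
  refine ⟨min (1/(2*(1+a))) (π₀/(4*(1+a))), lt_min (by positivity) (by positivity), ?_⟩
  intro c hc hcc₀ n K Uhat U μ g δ ghat hμ hg hU hsize hδ hSbound hKM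
  obtain ⟨cen, hcen⟩ := hKM
  obtain ⟨⟨k₀, k₁, hk01, hδeq⟩, hδlb⟩ := hδ
  have hδlb' : ∀ k k', k ≠ k' → δ ≤ l2 (μ k - μ k') := fun k k' h => hδlb ⟨k, k', h, rfl⟩
  have hδpos : 0 < δ := by
    rw [hδeq]
    exact l2_pos (sub_ne_zero_of_ne (fun h => hk01 (hμ h)))
  set S := norm21 (Uhat - U) with hSdef
  have hS0 : 0 ≤ S := Finset.sum_nonneg fun i _ => l2_nonneg _
  have hn : 0 < n := by
    obtain ⟨i, -⟩ := hg k₀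
    exact i.pos
  -- row differences
  have hrow : ∀ i, l2 (U i - Uhat i) = l2 ((Uhat - U) i) := by
    intro i
    have e : (Uhat - U) i = Uhat i - U i := rfl
    rw [e, ← neg_sub (U i) (Uhat i), l2_neg]
  have hrow' : ∀ i, l2 (Uhat i - U i) = l2 ((Uhat - U) i) := fun i => rfl
  -- cost bound
  have hcost : ∑ i, l2 (U i - cen (ghat i)) ≤ (1 + a) * S := by
    have h1 : ∀ i, l2 (U i - cen (ghat i)) ≤ l2 ((Uhat - U) i) + l2 (Uhat i - cen (ghat i)) := by
      intro i
      calc l2 (U i - cen (ghat i))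
          = l2 ((U i - Uhat i) + (Uhat i - cen (ghat i))) := by congr 1; abel
        _ ≤ l2 (U i - Uhat i) + l2 (Uhat i - cen (ghat i)) := l2_add_le _ _
        _ = l2 ((Uhat - U) i) + l2 (Uhat i - cen (ghat i)) := by rw [hrow]
    have h2 : ∑ i, l2 (Uhat i - cen (ghat i)) ≤ a * S := by
      have := hcen g μ
      calc ∑ i, l2 (Uhat i - cen (ghat i)) ≤ a * ∑ i, l2 (Uhat i - μ (g i)) := this
        _ = a * S := by
            congr 1
            refine Finset.sum_congr rfl fun i _ => ?_
            rw [← hU i, hrow' i]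
    calc ∑ i, l2 (U i - cen (ghat i))
        ≤ ∑ i, (l2 ((Uhat - U) i) + l2 (Uhat i - cen (ghat i))) :=
          Finset.sum_le_sum fun i _ => h1 i
      _ = S + ∑ i, l2 (Uhat i - cen (ghat i)) := by rw [Finset.sum_add_distrib]; rfl
      _ ≤ S + a * S := by linarith
      _ = (1 + a) * S := by ring
  -- bad set
  set Bad := Finset.univ.filter (fun i : Fin n => δ/2 ≤ l2 (U i - cen (ghat i))) with hBadDef
  have hBadcard : (Bad.card : ℝ) ≤ 2 * (1 + a) * S / δ := by
    have h1 : (Bad.card : ℝ) * (δ/2) ≤ ∑ i ∈ Bad, l2 (U i - cen (ghat i)) := by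
      calc (Bad.card : ℝ) * (δ/2) = ∑ _i ∈ Bad, δ/2 := by
            rw [Finset.sum_const, nsmul_eq_mul]
        _ ≤ ∑ i ∈ Bad, l2 (U i - cen (ghat i)) :=
            Finset.sum_le_sum fun i hi => (Finset.mem_filter.mp hi).2
    have h2 : ∑ i ∈ Bad, l2 (U i - cen (ghat i)) ≤ ∑ i, l2 (U i - cen (ghat i)) :=
      Finset.sum_le_sum_of_subset_of_nonneg (Finset.subset_univ _)
        (fun i _ _ => l2_nonneg _)
    rw [le_div_iff₀ hδpos]
    nlinarith [hcost, h1, h2]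
  -- uniqueness of nearby center
  have uniq : ∀ (ℓ k k' : Fin K), l2 (μ k - cen ℓ) < δ/2 → l2 (μ k' - cen ℓ) < δ/2 → k = k' := by
    intro ℓ k k' h1 h2
    by_contra hne
    have hlb := hδlb' k k' hne
    have htri : l2 (μ k - μ k') ≤ l2 (μ k - cen ℓ) + l2 (μ k' - cen ℓ) := by
      have e : μ k - μ k' = (μ k - cen ℓ) - (μ k' - cen ℓ) := by abel
      rw [e]
      exact l2_sub_le _ _
    linarith
  classical
  set τ : Fin K → Fin K := fun ℓ => if h : ∃ k, l2 (μ k - cen ℓ) < δ/2 then h.choose else ℓ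
    with hτdef
  have hτ : ∀ (ℓ k : Fin K), l2 (μ k - cen ℓ) < δ/2 → τ ℓ = k := by
    intro ℓ k hk
    have h : ∃ k, l2 (μ k - cen ℓ) < δ/2 := ⟨k, hk⟩
    rw [hτdef]
    simp only [dif_pos h]
    exact uniq ℓ _ k h.choose_spec hk
  have hgood : ∀ i : Fin n, i ∉ Bad → τ (ghat i) = g i := by
    intro i hi
    have hlt : l2 (U i - cen (ghat i)) < δ/2 := by
      by_contra h
      exact hi (Finset.mem_filter.mpr ⟨Finset.mem_univ _, le_of_not_gt h⟩)
    exact hτ _ _ (by rwa [← hU i])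
  -- Bad is smaller than any community
  have hBadlt : (Bad.card : ℝ) < π₀ * n := by
    have hc2 : c ≤ π₀ / (4*(1+a)) := le_trans hcc₀ (min_le_right _ _)
    have hn1 : (1:ℝ) ≤ n := by exact_mod_cast hn
    have h3 : 2*(1+a)*S/δ ≤ 2*(1+a)*(c*n) := by
      rw [div_le_iff₀ hδpos]
      nlinarith
    have h4 : c * n ≤ π₀/(4*(1+a)) * n :=
      mul_le_mul_of_nonneg_right hc2 (by positivity)
    have h5 : 2*(1+a)*(π₀/(4*(1+a)) * n) = π₀*n/2 := by
      field_simp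
      ring
    nlinarith [hBadcard]
  -- τ is surjective, hence bijective
  have hsurj : Function.Surjective τ := by
    intro k
    have hex : ∃ i, i ∉ Bad ∧ g i = k := by
      by_contra h
      push_neg at h
      have hsub : Finset.univ.filter (fun i => g i = k) ⊆ Bad := by
        intro i hi
        by_contra hib
        exact h i hib (Finset.mem_filter.mp hi).2
      have hcc : ((Finset.univ.filter (fun i => g i = k)).card : ℝ) ≤ (Bad.card : ℝ) := by
        exact_mod_cast Finset.card_le_card hsub
      linarith [hsize k, hBadlt]
    obtain ⟨i, hiB, hik⟩ := hex
    exact ⟨ghat i, by rw [hgood i hiB, hik]⟩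
  have hbij : Function.Bijective τ := Finite.surjective_iff_bijective.mp hsurj
  refine ⟨Equiv.ofBijective τ hbij, ?_⟩
  have hsub : (Finset.univ.filter fun i => (Equiv.ofBijective τ hbij) (ghat i) ≠ g i) ⊆ Bad := by
    intro i hi
    by_contra hib
    exact (Finset.mem_filter.mp hi).2 (by simpa [Equiv.ofBijective] using hgood i hib)
  have hcard : (((Finset.univ.filter fun i =>
      (Equiv.ofBijective τ hbij) (ghat i) ≠ g i)).card : ℝ) ≤ (Bad.card : ℝ) := by
    exact_mod_cast Finset.card_le_card hsub
  have hcinv : 2*(1+a) ≤ c⁻¹ := by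
    have hc1 : c ≤ 1/(2*(1+a)) := le_trans hcc₀ (min_le_left _ _)
    have h6 : 1/(1/(2*(1+a))) ≤ 1/c := one_div_le_one_div_of_le hc hc1
    rw [one_div_one_div, one_div] at h6
    exact h6
  have hfinal : 2*(1+a)*S/δ ≤ c⁻¹ * S / δ := by
    have := mul_le_mul_of_nonneg_right hcinv hS0
    gcongr
  calc (((Finset.univ.filter fun i =>
      (Equiv.ofBijective τ hbij) (ghat i) ≠ g i)).card : ℝ)
      ≤ (Bad.card : ℝ) := hcard
    _ ≤ 2*(1+a)*S/δ := hBadcard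
    _ ≤ c⁻¹ * S / δ := hfinal

end
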